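/- Let A ∈ M_3(ℂ) be upper triangular, let S ∈ M_3(ℂ) be Hermitian and upper triangular (hence diagonal with real entries) with Re(A) ≤ S, and let B ∈ M_3(ℂ) be strictly upper triangular with ‖B‖ ≤ 1. Then |Tr(A B*)| ≤ √2·(Tr(S) − Re(Tr(A))). -/

import Mathlib

open Matrix
open scoped Matrix.Norms.L2Operator ComplexOrder


lemma exists_unit (b : ℂ) : ∃ u : ℂ, ‖u‖ = 1 ∧ b * u = ‖b‖ := by
  rcases eq_or_ne b 0 with rfl | h
  · exact ⟨1, by simp, by simp⟩
  · have hb : (‖b‖ : ℂ) ≠ 0 := by exact_mod_cast (norm_ne_zero_iff.mpr h)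
    refine ⟨(starRingEnd ℂ) b / ‖b‖, ?_, ?_⟩
    · simp [map_div₀, Complex.norm_conj, norm_norm, div_self, (norm_ne_zero_iff.mpr h)]
    · rw [mul_div_assoc', Complex.mul_conj, Complex.normSq_eq_norm_sq]
      push_cast
      field_simp

lemma exists_unit' (b : ℂ) : ∃ u : ℂ, ‖u‖ = 1 ∧ (starRingEnd ℂ) u * b = -(‖b‖) := by
  obtain ⟨u0, hu0, hbu⟩ := exists_unit b
  refine ⟨-(starRingEnd ℂ) u0, by simpa using hu0, ?_⟩
  simp only [map_neg, RingHomCompTriple.comp_apply, RingHom.id_apply, starRingEnd_self_apply]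
  rw [neg_mul, mul_comm, hbu]

-- quadratic form value on r·u·e_i + e_j
lemma psd_quad {n : Type*} [Fintype n] [DecidableEq n] {M : Matrix n n ℂ}
    (hM : M.PosSemidef) {i j : n} (hij : i ≠ j) (u : ℂ) (hu : ‖u‖ = 1) (r : ℝ) :
    0 ≤ (M i i).re * r ^ 2 + 2 * r * ((starRingEnd ℂ) u * M i j).re + (M j j).re := by
  have h := hM.re_dotProduct_nonneg (Pi.single i ((r : ℂ) * u) + Pi.single j 1)
  have huu : (starRingEnd ℂ) u * u = 1 := by
    rw [mul_comm, Complex.mul_conj, Complex.normSq_eq_norm_sq, hu]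
    norm_num
  have hji : M j i = (starRingEnd ℂ) (M i j) := (hM.isHermitian.apply j i).symm
  have hx : star (Pi.single i ((r:ℂ)*u) + Pi.single j (1:ℂ)) ⬝ᵥ
      (M *ᵥ (Pi.single i ((r:ℂ)*u) + Pi.single j 1)) =
      (r:ℂ)^2 * ((starRingEnd ℂ) u * u) * M i i + (r:ℂ) * ((starRingEnd ℂ) u * M i j)
        + (r:ℂ) * (u * M j i) + M j j := by
    simp only [star_add, ← Pi.single_star, mulVec_add, mulVec_single, dotProduct_add,
      add_dotProduct, single_dotProduct, star_mul', Complex.star_def, mul_one, one_mul,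
      Pi.add_apply, Pi.single_eq_same, Pi.single_eq_of_ne hij, Pi.single_eq_of_ne hij.symm,
      add_zero, zero_add, mul_zero]
    simp only [_root_.map_one, Complex.conj_ofReal, Pi.smul_apply, op_smul_eq_mul, Matrix.col_apply]
    ring
  rw [hx, huu, mul_one] at h
  have h2 : u * M j i = (starRingEnd ℂ) ((starRingEnd ℂ) u * M i j) := by
    rw [hji, _root_.map_mul, RingHomCompTriple.comp_apply, RingHom.id_apply]
  rw [h2] at h
  simp only [RCLike.re_to_complex, Complex.add_re, Complex.conj_re, ← Complex.ofReal_pow,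
    Complex.re_ofReal_mul] at h
  linarith

lemma psd_diag {n : Type*} [Fintype n] [DecidableEq n] {M : Matrix n n ℂ}
    (hM : M.PosSemidef) (i : n) : 0 ≤ (M i i).re :=
  hM.re_dotProduct_nonneg (Pi.single i 1) |>.trans_eq (by
    simp [dotProduct, mulVec, Pi.single_apply, Finset.mul_sum, apply_ite])

lemma psd_entry {n : Type*} [Fintype n] [DecidableEq n] {M : Matrix n n ℂ}
    (hM : M.PosSemidef) {i j : n} (hij : i ≠ j) :
    ‖(M i j)‖ ≤ Real.sqrt (M i i).re * Real.sqrt (M j j).re := by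
  set c := ‖(M i j)‖ with hc
  have hc0 : 0 ≤ c := norm_nonneg _
  have hdi : 0 ≤ (M i i).re := psd_diag hM i
  have hdj : 0 ≤ (M j j).re := psd_diag hM j
  obtain ⟨u, hu, huM⟩ := exists_unit' (M i j)
  have hr : ∀ r : ℝ, 0 ≤ (M i i).re * r ^ 2 - 2 * c * r + (M j j).re := by
    intro r
    have := psd_quad hM hij u hu r
    rw [huM] at this
    simp only [Complex.neg_re, Complex.ofReal_re] at this
    linarith
  have hsq : c ^ 2 ≤ (M i i).re * (M j j).re := by
    rcases eq_or_lt_of_le hdi with h0 | hpos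
    · have hcz : c = 0 := by
        by_contra hcne
        have hcpos : 0 < c := lt_of_le_of_ne hc0 (Ne.symm hcne)
        have h1 := hr (((M j j).re + 1) / (2 * c))
        rw [← h0] at h1
        have h2 : 2 * c * (((M j j).re + 1) / (2 * c)) = (M j j).re + 1 := by
          field_simp
        nlinarith
      rw [hcz]
      simpa using mul_nonneg hdi hdj
    · have h1 := hr (c / (M i i).re)
      have h2 : (M i i).re * (c / (M i i).re) ^ 2 = c ^ 2 / (M i i).re := by
        field_simp
      rw [h2] at h1
      have h3 : 2 * c * (c / (M i i).re) = 2 * (c ^ 2 / (M i i).re) := by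
        field_simp
      rw [h3] at h1
      have h4 : c ^ 2 / (M i i).re ≤ (M j j).re := by linarith
      calc c ^ 2 = (c ^ 2 / (M i i).re) * (M i i).re := by field_simp
        _ ≤ (M j j).re * (M i i).re := by
            exact mul_le_mul_of_nonneg_right h4 hdi
        _ = (M i i).re * (M j j).re := mul_comm _ _
  calc c = Real.sqrt (c ^ 2) := (Real.sqrt_sq hc0).symm
    _ ≤ Real.sqrt ((M i i).re * (M j j).re) := Real.sqrt_le_sqrt hsq
    _ = _ := Real.sqrt_mul hdi _

lemma scalar_sq (p0 p1 p2 t s : ℝ) (hp0 : 0 ≤ p0) (hp1 : 0 ≤ p1) (hp2 : 0 ≤ p2)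
    (ht : 0 ≤ t) (hs : 0 ≤ s) (h1 : t^2 + s^2 ≤ p1^2 + p2^2) (h2 : s ≤ p2) :
    2*(p0*t + p1*s)^2 ≤ (p0^2 + p1^2 + p2^2)^2 := by
  rcases le_or_gt (p1^2) (p0*p2) with hc | hc
  · -- Cauchy-Schwarz case
    have hcs : p1^2 * p1^2 ≤ (p0*p2) * (p0*p2) :=
      mul_self_le_mul_self (sq_nonneg p1) hc
    have hmul := mul_le_mul_of_nonneg_left h1 (by positivity : (0:ℝ) ≤ p0^2 + p1^2)
    nlinarith [sq_nonneg (p0*s - p1*t), sq_nonneg (p0^2 - p2^2)]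
  · -- claim : p0*t + p1*s ≤ p1*(p0+p2)
    have hf : 0 ≤ p0*t + p1*s := by positivity
    have claim : p0*t + p1*s ≤ p1*(p0+p2) := by
      rcases eq_or_lt_of_le hp1 with h1z | h1pos
      · nlinarith [mul_nonneg hp0 hp2]
      rcases eq_or_lt_of_le hp2 with h2z | h2pos
      · have hs0 : s = 0 := le_antisymm (h2.trans h2z.symm.le) hs
        have htp1 : t ≤ p1 := by nlinarith
        nlinarith [mul_le_mul_of_nonneg_left htp1 hp0]
      rcases le_or_gt t p1 with htp | htp
      · nlinarith [mul_le_mul_of_nonneg_left htp hp0, mul_le_mul_of_nonneg_left h2 hp1]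
      · have hK : (0:ℝ) < 2*p1*p2 := by positivity
        have hmain : (2*p1*p2) * (p0*(t-p1)) ≤ (2*p1*p2) * (p1*(p2-s)) := by
          have e1 : p0*p2*((t-p1)*(2*p1)) ≤ p0*p2*((t-p1)*(t+p1)) := by
            nlinarith [mul_nonneg (mul_nonneg (mul_nonneg hp0 hp2) (by linarith : (0:ℝ) ≤ t - p1)) (by linarith : (0:ℝ) ≤ t - p1)]
          have e2 : p0*p2*((t-p1)*(t+p1)) ≤ p0*p2*((p2-s)*(p2+s)) := by
            have h3 : (t-p1)*(t+p1) ≤ (p2-s)*(p2+s) := by nlinarith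
            exact mul_le_mul_of_nonneg_left h3 (mul_nonneg hp0 hp2)
          have e3 : p0*p2*((p2-s)*(p2+s)) ≤ p1^2*((p2-s)*(p2+s)) := by
            have h4 : 0 ≤ (p2-s)*(p2+s) := by nlinarith
            nlinarith
          have e4 : p1^2*((p2-s)*(p2+s)) ≤ p1^2*((p2-s)*(2*p2)) := by
            have h5 : 0 ≤ p2 - s := by linarith
            nlinarith [sq_nonneg p1, mul_nonneg (mul_nonneg (sq_nonneg p1) h5) (by linarith : 0 ≤ p2 - s)]
          nlinarith
        have := le_of_mul_le_mul_left hmain hK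
        linarith
    nlinarith [mul_self_le_mul_self hf claim, sq_nonneg (p1^2 - p0^2 - p2^2),
      mul_nonneg (sq_nonneg p1) (sq_nonneg (p0 - p2))]

lemma scalar_key (p0 p1 p2 t s : ℝ) (hp0 : 0 ≤ p0) (hp1 : 0 ≤ p1) (hp2 : 0 ≤ p2)
    (ht : 0 ≤ t) (hs : 0 ≤ s) (h1 : t^2 + s^2 ≤ p1^2 + p2^2) (h2 : s ≤ p2) :
    2*(p0*t + p1*s) ≤ Real.sqrt 2 * (p0^2 + p1^2 + p2^2) := by
  have hf : 0 ≤ 2*(p0*t+p1*s) := by positivity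
  have hsq := scalar_sq p0 p1 p2 t s hp0 hp1 hp2 ht hs h1 h2
  calc 2*(p0*t + p1*s) = Real.sqrt ((2*(p0*t + p1*s))^2) := (Real.sqrt_sq hf).symm
    _ ≤ Real.sqrt (2 * (p0^2+p1^2+p2^2)^2) := Real.sqrt_le_sqrt (by nlinarith)
    _ = Real.sqrt 2 * (p0^2 + p1^2 + p2^2) := by
        rw [Real.sqrt_mul (by norm_num : (0:ℝ) ≤ 2), Real.sqrt_sq (by positivity)]

lemma mulvec_sq_le {B : Matrix (Fin 3) (Fin 3) ℂ} (hB : ‖B‖ ≤ 1) (v : Fin 3 → ℂ) :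
    ‖((B *ᵥ v) 0)‖^2 + ‖((B *ᵥ v) 1)‖^2 + ‖((B *ᵥ v) 2)‖^2 ≤
      ‖(v 0)‖^2 + ‖(v 1)‖^2 + ‖(v 2)‖^2 := by
  set x : EuclideanSpace ℂ (Fin 3) := (EuclideanSpace.equiv (Fin 3) ℂ).symm v with hx
  have h := Matrix.l2_opNorm_mulVec B x
  have hxn : ‖x‖ = Real.sqrt (‖(v 0)‖^2 + ‖(v 1)‖^2 + ‖(v 2)‖^2) := by
    rw [EuclideanSpace.norm_eq]
    congr 1
    simp [Fin.sum_univ_three, hx]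
  have hyn : ‖(EuclideanSpace.equiv (Fin 3) ℂ).symm (B *ᵥ x)‖ =
      Real.sqrt (‖((B *ᵥ v) 0)‖^2 + ‖((B *ᵥ v) 1)‖^2 + ‖((B *ᵥ v) 2)‖^2) := by
    rw [EuclideanSpace.norm_eq]
    congr 1
    simp only [Fin.sum_univ_three]
    rfl
  rw [hxn, hyn] at h
  have hBx : ‖B‖ * Real.sqrt (‖(v 0)‖^2 + ‖(v 1)‖^2 + ‖(v 2)‖^2) ≤
      Real.sqrt (‖(v 0)‖^2 + ‖(v 1)‖^2 + ‖(v 2)‖^2) := by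
    have := Real.sqrt_nonneg (‖(v 0)‖^2 + ‖(v 1)‖^2 + ‖(v 2)‖^2)
    nlinarith
  have h2 := h.trans hBx
  have h3 := pow_le_pow_left₀ (Real.sqrt_nonneg _) h2 2
  rwa [Real.sq_sqrt (by positivity), Real.sq_sqrt (by positivity)] at h3


/-- The improved coefficient estimate in the 3×3 case:
`|Tr(A Bᴴ)| ≤ √2 (Tr S − Re Tr A)`. -/
theorem bohr_coefficient_estimate_three_by_three
    (A S B : Matrix (Fin 3) (Fin 3) ℂ)
    (hA_ut : ∀ i j : Fin 3, j < i → A i j = 0)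
    (hS_herm : S.IsHermitian)
    (hS_ut : ∀ i j : Fin 3, j < i → S i j = 0)
    (hAS : (S - (2 : ℂ)⁻¹ • (A + Aᴴ)).PosSemidef)
    (hB_sut : ∀ i j : Fin 3, j ≤ i → B i j = 0)
    (hB_norm : ‖B‖ ≤ 1) :
    ‖((A * Bᴴ).trace)‖ ≤ Real.sqrt 2 * (S.trace.re - A.trace.re) := by
  set M : Matrix (Fin 3) (Fin 3) ℂ := S - (2 : ℂ)⁻¹ • (A + Aᴴ) with hM
  -- diagonal values
  set d : Fin 3 → ℝ := fun i => (M i i).re with hd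
  set p : Fin 3 → ℝ := fun i => Real.sqrt (d i) with hp
  have hdnn : ∀ i, 0 ≤ d i := fun i => psd_diag hAS i
  have hpnn : ∀ i, 0 ≤ p i := fun i => Real.sqrt_nonneg _
  have hpsq : ∀ i, p i ^ 2 = d i := fun i => Real.sq_sqrt (hdnn i)
  -- diagonal identity
  have hdiag : ∀ i, d i = (S i i).re - (A i i).re := by
    intro i
    have hMi : M i i = S i i - (2 : ℂ)⁻¹ * (A i i + (starRingEnd ℂ) (A i i)) := by
      simp [hM, Matrix.sub_apply, Matrix.smul_apply, Matrix.add_apply, conjTranspose_apply,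
        smul_eq_mul, Complex.star_def, mul_add]
    show (M i i).re = _
    rw [hMi, Complex.add_conj]
    simp [Complex.sub_re, Complex.mul_re]
  -- off-diagonal entries
  have hSompl : ∀ i j : Fin 3, i < j → S i j = 0 := by
    intro i j hij
    rw [← hS_herm.apply i j, hS_ut j i hij]
    simp
  have hentry : ∀ i j : Fin 3, i < j → A i j = (-2 : ℂ) * M i j := by
    intro i j hij
    have : M i j = S i j - (2 : ℂ)⁻¹ * (A i j + (starRingEnd ℂ) (A j i)) := by
      simp [hM, Matrix.sub_apply, Matrix.smul_apply, Matrix.add_apply, conjTranspose_apply,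
        smul_eq_mul, Complex.star_def, mul_add]
    rw [hSompl i j hij, hA_ut j i hij] at this
    simp at this
    rw [this]
    ring
  have habs : ∀ i j : Fin 3, i < j → ‖(A i j)‖ ≤ 2 * (p i * p j) := by
    intro i j hij
    rw [hentry i j hij]
    rw [norm_mul]
    have h1 := psd_entry hAS (ne_of_lt hij)
    have h2 : ‖(-2 : ℂ)‖ = 2 := by
      simp
    rw [h2]
    have := mul_le_mul_of_nonneg_left h1 (by norm_num : (0:ℝ) ≤ 2)
    calc 2 * ‖(M i j)‖ ≤ 2 * (Real.sqrt (M i i).re * Real.sqrt (M j j).re) := this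
      _ = 2 * (p i * p j) := rfl
  -- zero entries of B
  have hB00 : B 0 0 = 0 := hB_sut 0 0 le_rfl
  have hB10 : B 1 0 = 0 := hB_sut 1 0 (by decide)
  have hB11 : B 1 1 = 0 := hB_sut 1 1 le_rfl
  have hB20 : B 2 0 = 0 := hB_sut 2 0 (by decide)
  have hB21 : B 2 1 = 0 := hB_sut 2 1 (by decide)
  have hB22 : B 2 2 = 0 := hB_sut 2 2 le_rfl
  set x := ‖(B 0 1)‖ with hx
  set y := ‖(B 0 2)‖ with hy
  set z := ‖(B 1 2)‖ with hz
  have hxnn : 0 ≤ x := norm_nonneg _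
  have hynn : 0 ≤ y := norm_nonneg _
  have hznn : 0 ≤ z := norm_nonneg _
  -- trace expansion
  have htr : (A * Bᴴ).trace = A 0 1 * (starRingEnd ℂ) (B 0 1) + A 0 2 * (starRingEnd ℂ) (B 0 2)
      + A 1 2 * (starRingEnd ℂ) (B 1 2) := by
    simp [Matrix.trace_fin_three, Matrix.mul_apply, Fin.sum_univ_three, conjTranspose_apply,
      Complex.star_def, hB00, hB10, hB11, hB20, hB21, hB22]
  -- bound the trace by entries
  have habs_tr : ‖((A * Bᴴ).trace)‖ ≤
      2 * (p 0 * p 1) * x + 2 * (p 0 * p 2) * y + 2 * (p 1 * p 2) * z := by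
    rw [htr]
    have e01 : ‖(A 0 1 * (starRingEnd ℂ) (B 0 1))‖ ≤ 2 * (p 0 * p 1) * x := by
      rw [norm_mul, Complex.norm_conj]
      exact mul_le_mul_of_nonneg_right (habs 0 1 (by decide)) hxnn
    have e02 : ‖(A 0 2 * (starRingEnd ℂ) (B 0 2))‖ ≤ 2 * (p 0 * p 2) * y := by
      rw [norm_mul, Complex.norm_conj]
      exact mul_le_mul_of_nonneg_right (habs 0 2 (by decide)) hynn
    have e12 : ‖(A 1 2 * (starRingEnd ℂ) (B 1 2))‖ ≤ 2 * (p 1 * p 2) * z := by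
      rw [norm_mul, Complex.norm_conj]
      exact mul_le_mul_of_nonneg_right (habs 1 2 (by decide)) hznn
    calc ‖(A 0 1 * (starRingEnd ℂ) (B 0 1) + A 0 2 * (starRingEnd ℂ) (B 0 2)
          + A 1 2 * (starRingEnd ℂ) (B 1 2))‖
        ≤ ‖(A 0 1 * (starRingEnd ℂ) (B 0 1) + A 0 2 * (starRingEnd ℂ) (B 0 2))‖
          + ‖(A 1 2 * (starRingEnd ℂ) (B 1 2))‖ := norm_add_le _ _
      _ ≤ ‖(A 0 1 * (starRingEnd ℂ) (B 0 1))‖ + ‖(A 0 2 * (starRingEnd ℂ) (B 0 2))‖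
          + ‖(A 1 2 * (starRingEnd ℂ) (B 1 2))‖ := by
            have := norm_add_le (A 0 1 * (starRingEnd ℂ) (B 0 1)) (A 0 2 * (starRingEnd ℂ) (B 0 2))
            linarith
      _ ≤ _ := by linarith
  -- z ≤ 1 from the norm bound
  have hz1 : z ≤ 1 := by
    have h := mulvec_sq_le hB_norm (Pi.single 2 1)
    simp only [mulVec_single, mul_one] at h
    simp [Pi.single_apply, hB22] at h
    nlinarith
  -- the main constraint from the norm bound
  obtain ⟨u1, hu1, hbu1⟩ := exists_unit (B 0 1)
  obtain ⟨u2, hu2, hbu2⟩ := exists_unit (B 0 2)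
  have hmain : (x * p 1 + y * p 2)^2 + (z * p 2)^2 ≤ (p 1)^2 + (p 2)^2 := by
    have h := mulvec_sq_le hB_norm ![0, u1 * (p 1 : ℝ), u2 * (p 2 : ℝ)]
    have hv0 : (B *ᵥ ![0, u1 * (p 1 : ℝ), u2 * (p 2 : ℝ)]) 0 = ((x * p 1 + y * p 2 : ℝ) : ℂ) := by
      simp [mulVec, dotProduct, Fin.sum_univ_three]
      rw [← mul_assoc, ← mul_assoc, hbu1, hbu2]
    have hv1 : (B *ᵥ ![0, u1 * (p 1 : ℝ), u2 * (p 2 : ℝ)]) 1 = B 1 2 * u2 * (p 2 : ℝ) := by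
      simp [mulVec, dotProduct, Fin.sum_univ_three, hB10, hB11]
      ring
    have hv2 : (B *ᵥ ![0, u1 * (p 1 : ℝ), u2 * (p 2 : ℝ)]) 2 = 0 := by
      simp [mulVec, dotProduct, Fin.sum_univ_three, hB20, hB21, hB22]
    rw [hv0, hv1, hv2] at h
    have ha0 : ‖((x * p 1 + y * p 2 : ℝ) : ℂ)‖ = x * p 1 + y * p 2 := by
      rw [Complex.norm_real, Real.norm_eq_abs, abs_of_nonneg]
      have := mul_nonneg hxnn (hpnn 1)
      have := mul_nonneg hynn (hpnn 2)
      linarith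
    have ha1 : ‖(B 1 2 * u2 * (p 2 : ℝ))‖ = z * p 2 := by
      rw [norm_mul, norm_mul, hu2, Complex.norm_real, Real.norm_eq_abs, abs_of_nonneg (hpnn 2)]
      ring
    rw [ha0, ha1] at h
    simp [hu1, hu2, Complex.norm_real, Real.norm_eq_abs, abs_of_nonneg (hpnn 1), abs_of_nonneg (hpnn 2)] at h
    linarith
  -- apply the scalar inequality
  have hs2 : z * p 2 ≤ p 2 := by nlinarith [hpnn 2]
  have hkey := scalar_key (p 0) (p 1) (p 2) (x * p 1 + y * p 2) (z * p 2) (hpnn 0) (hpnn 1)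
    (hpnn 2) (by positivity) (by positivity) hmain hs2
  -- conclude
  have htrace_d : S.trace.re - A.trace.re = d 0 + d 1 + d 2 := by
    rw [Matrix.trace_fin_three, Matrix.trace_fin_three]
    simp only [Complex.add_re, hdiag]
    ring
  rw [htrace_d]
  have hfinal : 2 * (p 0 * p 1) * x + 2 * (p 0 * p 2) * y + 2 * (p 1 * p 2) * z
      = 2 * (p 0 * (x * p 1 + y * p 2) + p 1 * (z * p 2)) := by ring
  have hQ : (p 0)^2 + (p 1)^2 + (p 2)^2 = d 0 + d 1 + d 2 := by
    rw [hpsq 0, hpsq 1, hpsq 2]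
  calc ‖((A * Bᴴ).trace)‖
      ≤ 2 * (p 0 * p 1) * x + 2 * (p 0 * p 2) * y + 2 * (p 1 * p 2) * z := habs_tr
    _ = 2 * (p 0 * (x * p 1 + y * p 2) + p 1 * (z * p 2)) := hfinal
    _ ≤ Real.sqrt 2 * ((p 0)^2 + (p 1)^2 + (p 2)^2) := hkey
    _ = Real.sqrt 2 * (d 0 + d 1 + d 2) := by rw [hQ]
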